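/- arXiv:2306.14520 — 7 statements merged into one kernel-verified Lean document; each statement's English description precedes it below -/
import Mathlib

section
/- For positive integers A and B, real numbers ρ₁ > 0 and ρ₂, …, ρ_A ≥ 0, the ratio (∑_{i=1}^{A} ρ_i) / (min_{s=1,…,A} (∑_{i=1}^{s-1} ρ_i + B·ρ_s)) is at least 1 - (1 - 1/B)^A. -/
theorem stmt_0 (A B : ℕ) (hA : 0 < A) (hB : 0 < B) (ρ : ℕ → ℝ)
    (hρ1 : 0 < ρ 1) (hρ : ∀ i, 2 ≤ i → i ≤ A → 0 ≤ ρ i) :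
    (∑ i ∈ Finset.Icc 1 A, ρ i) /
      ((Finset.Icc 1 A).inf' (Finset.nonempty_Icc.mpr hA)
        (fun s => (∑ i ∈ Finset.Icc 1 (s - 1), ρ i) + (B : ℝ) * ρ s))
      ≥ 1 - (1 - 1 / (B : ℝ)) ^ A := by
  set m := (Finset.Icc 1 A).inf' (Finset.nonempty_Icc.mpr hA)
      (fun s => (∑ i ∈ Finset.Icc 1 (s - 1), ρ i) + (B : ℝ) * ρ s) with hm
  have hBpos : (0:ℝ) < B := by exact_mod_cast hB
  have hB1 : (1:ℝ) ≤ B := by exact_mod_cast hB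
  have hq0 : (0:ℝ) ≤ 1 - 1 / B := by
    rw [sub_nonneg]
    exact div_le_one_of_le₀ hB1 hBpos.le
  have hρ' : ∀ i, 1 ≤ i → i ≤ A → 0 ≤ ρ i := by
    intro i h1 h2
    rcases eq_or_lt_of_le h1 with h | h
    · rw [← h]; exact hρ1.le
    · exact hρ i h h2
  have hmpos : 0 < m := by
    rw [hm, Finset.lt_inf'_iff]
    intro s hs
    simp only [Finset.mem_Icc] at hs
    rcases eq_or_lt_of_le hs.1 with h | h
    · rw [← h]
      simpa using mul_pos hBpos hρ1
    · have h2 : 2 ≤ s := h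
      have hsum : ρ 1 ≤ ∑ i ∈ Finset.Icc 1 (s-1), ρ i := by
        apply Finset.single_le_sum (fun i hi => ?_)
        · simp only [Finset.mem_Icc]
          omega
        · simp only [Finset.mem_Icc] at hi
          exact hρ' i hi.1 (by omega)
      have : 0 ≤ (B:ℝ) * ρ s := mul_nonneg hBpos.le (hρ' s (by omega) hs.2)
      linarith
  have key : ∀ s, s ≤ A → m - ∑ i ∈ Finset.Icc 1 s, ρ i ≤ m * (1 - 1/B)^s := by
    intro s
    induction s with
    | zero => intro _; simp
    | succ n ih =>
      intro hsA
      have ihn := ih (by omega)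
      have hmem : n + 1 ∈ Finset.Icc 1 A := by simp only [Finset.mem_Icc]; omega
      have hle := Finset.inf'_le (b := n+1)
        (fun s => (∑ i ∈ Finset.Icc 1 (s - 1), ρ i) + (B : ℝ) * ρ s) hmem
      rw [← hm] at hle
      simp only [Nat.add_sub_cancel] at hle
      have hsum : ∑ i ∈ Finset.Icc 1 (n+1), ρ i
          = (∑ i ∈ Finset.Icc 1 n, ρ i) + ρ (n+1) :=
        Finset.sum_Icc_succ_top (by omega) ρ
      set S := ∑ i ∈ Finset.Icc 1 n, ρ i
      have h1 : m - S - ρ (n+1) ≤ (m - S) * (1 - 1/B) := by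
        have : (m - S) / B ≤ ρ (n+1) := by
          rw [div_le_iff₀ hBpos]
          nlinarith
        have hexp : (m - S) * (1 - 1/B) = (m - S) - (m - S)/B := by
          field_simp
        linarith
      have h2 : (m - S) * (1 - 1/B) ≤ m * (1 - 1/B)^n * (1 - 1/B) :=
        mul_le_mul_of_nonneg_right ihn hq0
      rw [hsum]
      calc m - (S + ρ (n+1)) = m - S - ρ (n+1) := by ring
        _ ≤ m * (1 - 1/B)^n * (1 - 1/B) := le_trans h1 h2
        _ = m * (1 - 1/B)^(n+1) := by ring
  have hkeyA := key A le_rfl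
  rw [ge_iff_le, le_div_iff₀ hmpos]
  nlinarith
end

section
/- For positive integers A and B, real numbers ρ₁ > 0 and ρ₂, …, ρ_A ≥ 0, we have (∑_{i=1}^{A} ρ_i) ≥ (1 - e^{-A/B}) · min_{s=1,…,A} (∑_{i=1}^{s-1} ρ_i + B·ρ_s). -/
theorem stmt_2 (A B : ℕ) (hA : 0 < A) (hB : 0 < B) (ρ : ℕ → ℝ)
    (hρ1 : 0 < ρ 1) (hρ : ∀ i, 2 ≤ i → i ≤ A → 0 ≤ ρ i) :
    (∑ i ∈ Finset.Icc 1 A, ρ i) ≥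
      (1 - Real.exp (-(A : ℝ) / (B : ℝ))) *
        ((Finset.Icc 1 A).inf' (Finset.nonempty_Icc.mpr hA)
          (fun s => (∑ i ∈ Finset.Icc 1 (s - 1), ρ i) + (B : ℝ) * ρ s)) := by
  set m := (Finset.Icc 1 A).inf' (Finset.nonempty_Icc.mpr hA)
      (fun s => (∑ i ∈ Finset.Icc 1 (s - 1), ρ i) + (B : ℝ) * ρ s) with hm
  have hρnn : ∀ i, 1 ≤ i → i ≤ A → 0 ≤ ρ i := by
    intro i h1 h2
    rcases eq_or_lt_of_le h1 with h | h
    · exact h ▸ hρ1.le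
    · exact hρ i h h2
  have hB1 : (1 : ℝ) ≤ (B : ℝ) := by exact_mod_cast hB
  have hBpos : (0 : ℝ) < (B : ℝ) := by linarith
  have hmnn : 0 ≤ m := by
    apply Finset.le_inf'
    intro s hs
    simp only [Finset.mem_Icc] at hs
    have h1 : 0 ≤ ∑ i ∈ Finset.Icc 1 (s - 1), ρ i := by
      apply Finset.sum_nonneg
      intro i hi
      simp only [Finset.mem_Icc] at hi
      exact hρnn i hi.1 (le_trans hi.2 (le_trans (Nat.sub_le _ _) hs.2))
    have h2 : 0 ≤ (B : ℝ) * ρ s := mul_nonneg hBpos.le (hρnn s hs.1 hs.2)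
    linarith
  set q : ℝ := 1 - 1 / (B : ℝ) with hqdef
  have hq0 : 0 ≤ q := by
    have : 1 / (B : ℝ) ≤ 1 := by
      rw [div_le_one hBpos]; exact hB1
    simp only [hqdef]; linarith
  have hBq : (B : ℝ) * q = (B : ℝ) - 1 := by
    rw [hqdef]; field_simp
  have key : ∀ s, s ≤ A → m * (1 - q ^ s) ≤ ∑ i ∈ Finset.Icc 1 s, ρ i := by
    intro s
    induction s with
    | zero => intro _; simp
    | succ n ih =>
      intro hsA
      have hn := ih (Nat.le_of_succ_le hsA)
      have hmem : n + 1 ∈ Finset.Icc 1 A :=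
        Finset.mem_Icc.mpr ⟨Nat.succ_le_succ (Nat.zero_le n), hsA⟩
      have hle : m ≤ (∑ i ∈ Finset.Icc 1 (n + 1 - 1), ρ i) + (B : ℝ) * ρ (n + 1) :=
        Finset.inf'_le _ hmem
      simp only [Nat.add_sub_cancel] at hle
      have hsum : ∑ i ∈ Finset.Icc 1 (n + 1), ρ i
          = (∑ i ∈ Finset.Icc 1 n, ρ i) + ρ (n + 1) := by
        rw [Finset.sum_Icc_succ_top (by omega : 1 ≤ n + 1)]
      rw [hsum, ← mul_le_mul_iff_of_pos_left hBpos]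
      have e1 : (B : ℝ) * (m * (1 - q ^ (n + 1)))
          = (B : ℝ) * m - ((B : ℝ) - 1) * (m * q ^ n) := by
        rw [pow_succ]
        linear_combination (-(m * q ^ n)) * hBq
      have e2 : ((B : ℝ) - 1) * (m * (1 - q ^ n)) ≤ ((B : ℝ) - 1) * (∑ i ∈ Finset.Icc 1 n, ρ i) :=
        mul_le_mul_of_nonneg_left hn (by linarith)
      nlinarith [e1, e2, hle]
  have hPA := key A le_rfl
  have hqexp : q ≤ Real.exp (-(1 : ℝ) / (B : ℝ)) := by
    have h := Real.add_one_le_exp (-(1 : ℝ) / (B : ℝ))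
    simp only [hqdef]
    have : -(1 : ℝ) / (B : ℝ) = -(1 / (B : ℝ)) := by ring
    linarith [h, this ▸ h]
  have hpow : q ^ A ≤ Real.exp (-(A : ℝ) / (B : ℝ)) := by
    calc q ^ A ≤ (Real.exp (-(1 : ℝ) / (B : ℝ))) ^ A := pow_le_pow_left₀ hq0 hqexp A
      _ = Real.exp (-(A : ℝ) / (B : ℝ)) := by
          rw [← Real.exp_nat_mul]; congr 1; ring
  have hfin : (1 - Real.exp (-(A : ℝ) / (B : ℝ))) * m ≤ m * (1 - q ^ A) := by
    nlinarith [hmnn, hpow]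
  linarith [hPA, hfin]
end

section
/- If f : (k+1)^E → ℝ≥0 is k-submodular, then for any x ⪯ y in (k+1)^E, f(y) - f(x) ≤ ∑_{e ∈ P(y) \ P(x)} Δ_{e, y_e} f(x). -/
open Finset

/-- Join `⊔` on `(k+1)^E`, where a `k`-tuple of pairwise disjoint subsets of `E`
is represented as a function `E → Option (Fin k)`. -/
def ksup {E : Type*} {k : ℕ} (x y : E → Option (Fin k)) : E → Option (Fin k) :=
  fun e => match x e, y e with
  | none, b => b
  | some i, none => some i
  | some i, some j => if i = j then some i else none

/-- Meet `⊓` on `(k+1)^E`. -/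
def kinf {E : Type*} {k : ℕ} (x y : E → Option (Fin k)) : E → Option (Fin k) :=
  fun e => match x e, y e with
  | some i, some j => if i = j then some i else none
  | _, _ => none

/-- The partial order `x ⪯ y` : `X_i ⊆ Y_i` for all `i`. -/
def kle {E : Type*} {k : ℕ} (x y : E → Option (Fin k)) : Prop :=
  ∀ e i, x e = some i → y e = some i

/-- `I_{[e,i]}`: the `k`-tuple with `{e}` in coordinate `i` and `∅` elsewhere. -/
def ksingle {E : Type*} [DecidableEq E] {k : ℕ} (e : E) (i : Fin k) : E → Option (Fin k) :=
  fun e' => if e' = e then some i else none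

/-- Marginal gain `Δ_{e,i} f(x) = f(x ⊔ I_{[e,i]}) - f(x)`. -/
def marg {E : Type*} [DecidableEq E] {k : ℕ} (f : (E → Option (Fin k)) → ℝ)
    (x : E → Option (Fin k)) (e : E) (i : Fin k) : ℝ :=
  f (ksup x (ksingle e i)) - f x

/-- `f` is `k`-submodular: `f(x⊔y) + f(x⊓y) ≤ f(x) + f(y)`. -/
def KSubmodular {E : Type*} {k : ℕ} (f : (E → Option (Fin k)) → ℝ) : Prop :=
  ∀ x y, f (ksup x y) + f (kinf x y) ≤ f x + f y

/-- The support `P(x) = ⋃ᵢ Xᵢ` as a finset. -/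
def suppK {E : Type*} [Fintype E] {k : ℕ} (x : E → Option (Fin k)) : Finset E :=
  Finset.univ.filter fun e => x e ≠ none

/-- Orthant submodularity. -/
def OrthantSubmodular {E : Type*} [DecidableEq E] {k : ℕ}
    (f : (E → Option (Fin k)) → ℝ) : Prop :=
  ∀ x y, kle x y → ∀ e, y e = none → ∀ i, marg f y e i ≤ marg f x e i

/-- Pairwise monotonicity. -/
def PairwiseMonotone {E : Type*} [DecidableEq E] {k : ℕ}
    (f : (E → Option (Fin k)) → ℝ) : Prop :=
  ∀ x e, x e = none → ∀ i j : Fin k, i ≠ j → 0 ≤ marg f x e i + marg f x e j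

/-- Monotonicity with respect to `⪯`. -/
def KMonotone {E : Type*} {k : ℕ} (f : (E → Option (Fin k)) → ℝ) : Prop :=
  ∀ x y, kle x y → f x ≤ f y


lemma ksup_single_eq {E : Type*} [DecidableEq E] {k : ℕ} (x : E → Option (Fin k))
    (e : E) (i : Fin k) (hx : x e = none) :
    ksup x (ksingle e i) = Function.update x e (some i) := by
  funext e'
  by_cases h : e' = e
  · subst h; simp [ksup, ksingle, hx]
  · simp only [ksup, ksingle, if_neg h, Function.update, dif_neg h]
    cases x e' <;> rfl

lemma orth {E : Type*} [DecidableEq E] {k : ℕ} (f : (E → Option (Fin k)) → ℝ)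
    (hf : KSubmodular f) (x y : E → Option (Fin k)) (hxy : kle x y)
    (e : E) (hye : y e = none) (i : Fin k) : marg f y e i ≤ marg f x e i := by
  have hxe : x e = none := by
    cases hx : x e with
    | none => rfl
    | some j => have := hxy e j hx; rw [hye] at this; exact absurd this (by simp)
  have h1 : ksup (ksup x (ksingle e i)) y = ksup y (ksingle e i) := by
    funext e'
    by_cases h : e' = e
    · subst h; simp [ksup, ksingle, hxe, hye]
    · simp only [ksup, ksingle, if_neg h]
      cases hx : x e' with
      | none => cases y e' <;> rfl
      | some j => rw [hxy e' j hx]; simp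
  have h2 : kinf (ksup x (ksingle e i)) y = x := by
    funext e'
    by_cases h : e' = e
    · subst h; simp [kinf, ksup, ksingle, hxe, hye]
    · simp only [kinf, ksup, ksingle, if_neg h]
      cases hx : x e' with
      | none => cases y e' <;> rfl
      | some j => rw [hxy e' j hx]; simp
  have := hf (ksup x (ksingle e i)) y
  rw [h1, h2] at this
  unfold marg
  linarith

theorem stmt_3 {E : Type*} [Fintype E] [DecidableEq E] {k : ℕ}
    (f : (E → Option (Fin k)) → ℝ) (hf : KSubmodular f) (hnn : ∀ x, 0 ≤ f x)
    (x y : E → Option (Fin k)) (hxy : kle x y) :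
    f y - f x ≤ ∑ e ∈ suppK y \ suppK x, (y e).elim 0 (fun i => marg f x e i) := by
  set n := (suppK y \ suppK x).card with hn
  clear_value n
  induction n generalizing x with
  | zero =>
    have hS : suppK y \ suppK x = ∅ := Finset.card_eq_zero.mp hn.symm
    have hxy' : x = y := by
      funext e
      cases hx : x e with
      | some j => exact (hxy e j hx).symm
      | none =>
        cases hy : y e with
        | none => rfl
        | some j =>
          exfalso
          have : e ∈ suppK y \ suppK x := by
            simp [suppK, Finset.mem_sdiff, hx, hy]
          rw [hS] at this; exact absurd this (Finset.notMem_empty e)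
    rw [hxy']; simp
  | succ m ih =>
    have hne : (suppK y \ suppK x).Nonempty := by
      rw [← Finset.card_pos, ← hn]; omega
    obtain ⟨e, he⟩ := hne
    obtain ⟨hey, hex⟩ := Finset.mem_sdiff.mp he
    have hxe : x e = none := by
      by_contra h; exact hex (by simp [suppK, h])
    obtain ⟨i, hi⟩ : ∃ i, y e = some i := by
      have : y e ≠ none := by simpa [suppK] using hey
      cases hy : y e with
      | none => exact absurd hy this
      | some j => exact ⟨j, rfl⟩
    set x' := Function.update x e (some i) with hx'
    have hkle' : kle x' y := by
      intro e' j hj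
      by_cases h : e' = e
      · subst h; rw [hx', Function.update_self] at hj
        rw [hi, ← hj]
      · rw [hx', Function.update_of_ne h] at hj; exact hxy e' j hj
    have hkle2 : kle x x' := by
      intro e' j hj
      by_cases h : e' = e
      · subst h; rw [hxe] at hj; exact absurd hj (by simp)
      · rw [hx', Function.update_of_ne h]; exact hj
    have hsupp : suppK x' = insert e (suppK x) := by
      ext e'
      by_cases h : e' = e
      · subst h; simp [suppK, hx', Function.update_self]
      · simp [suppK, hx', Function.update_of_ne h, h]
    have hsdiff : suppK y \ suppK x' = (suppK y \ suppK x).erase e := by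
      ext e'
      simp only [hsupp, Finset.mem_sdiff, Finset.mem_insert, Finset.mem_erase, not_or]
      tauto
    have hcard : (suppK y \ suppK x').card = m := by
      rw [hsdiff, Finset.card_erase_of_mem he, ← hn]
      omega
    have hIH := ih x' hkle' hcard.symm
    have hterm : ∀ e' ∈ (suppK y \ suppK x).erase e,
        (y e').elim 0 (fun j => marg f x' e' j) ≤ (y e').elim 0 (fun j => marg f x e' j) := by
      intro e' he'
      obtain ⟨hne', he'm⟩ := Finset.mem_erase.mp he'
      obtain ⟨_, he'x⟩ := Finset.mem_sdiff.mp he'm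
      have hxe' : x e' = none := by
        by_contra h; exact he'x (by simp [suppK, h])
      have hx'e' : x' e' = none := by
        rw [hx', Function.update_of_ne hne']; exact hxe'
      cases hy : y e' with
      | none => simp
      | some j =>
        exact orth f hf x x' hkle2 e' hx'e' j
    have hsum : ∑ e' ∈ (suppK y \ suppK x).erase e, (y e').elim 0 (fun j => marg f x' e' j)
        ≤ ∑ e' ∈ (suppK y \ suppK x).erase e, (y e').elim 0 (fun j => marg f x e' j) :=
      Finset.sum_le_sum hterm
    have hmarg : marg f x e i = f x' - f x := by
      rw [marg, ksup_single_eq x e i hxe, hx']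
    have hsplit : ∑ e' ∈ suppK y \ suppK x, (y e').elim 0 (fun j => marg f x e' j)
        = (y e).elim 0 (fun j => marg f x e j)
          + ∑ e' ∈ (suppK y \ suppK x).erase e, (y e').elim 0 (fun j => marg f x e' j) :=
      (Finset.add_sum_erase _ _ he).symm
    rw [hsplit, hi]
    rw [hsdiff] at hIH
    have : (some i).elim (0:ℝ) (fun j => marg f x e j) = marg f x e i := rfl
    rw [this]
    linarith
end

section
/- A function f : (k+1)^E → ℝ is k-submodular if and only if it is orthant submodular and pairwise monotone. -/
open Finset

section Aux

set_option linter.unusedSectionVars false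

variable {E : Type*} [DecidableEq E] {k : ℕ}
variable {x y : E → Option (Fin k)} {e : E} {i j : Fin k}

lemma ksup_single (hx : x e = none) (i : Fin k) :
    ksup x (ksingle e i) = Function.update x e (some i) := by
  funext a
  by_cases h : a = e
  · subst h; simp [ksup, ksingle, hx]
  · simp only [ksup, ksingle, Function.update, if_neg h, dif_neg h]
    cases hxa : x a <;> simp [h]

lemma marg_eq (hx : x e = none) (i : Fin k) (f : (E → Option (Fin k)) → ℝ) :
    marg f x e i = f (Function.update x e (some i)) - f x := by
  rw [marg, ksup_single hx]

lemma update_update (hx : x e = some i) :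
    Function.update (Function.update x e none) e (some i) = x := by
  rw [Function.update_idem, ← hx, Function.update_eq_self]

lemma ksup_some_left {a : E} {b : Fin k} (hab : ksup x y a = some b) :
    x a = none ∨ x a = some b := by
  cases hxa : x a with
  | none => exact Or.inl rfl
  | some c =>
    right
    simp only [ksup, hxa] at hab
    cases hya : y a with
    | none => simp [hya] at hab; rw [hab]
    | some d => simp only [hya] at hab; split at hab <;> simp_all

-- base case
lemma base_ksup (h : ∀ a, y a ≠ none → x a = y a) : ksup x y = x := by
  funext a
  by_cases hya : y a = none
  · simp only [ksup, hya]; cases x a <;> simp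
  · have := h a hya
    simp only [ksup, ← this]
    cases x a <;> simp

lemma base_kinf (h : ∀ a, y a ≠ none → x a = y a) : kinf x y = y := by
  funext a
  by_cases hya : y a = none
  · simp only [kinf, hya]; cases x a <;> simp
  · have := h a hya
    cases hy : y a with
    | none => exact absurd hy hya
    | some b => have hx := this.trans hy; simp [kinf, hx, hy]

-- conflict step: x e = some i, y e = some j, i ≠ j, x' = update x e none
lemma conflict_kinf (hx : x e = some i) (hy : y e = some j) (hij : i ≠ j) :
    kinf (Function.update x e none) y = kinf x y := by
  funext a
  by_cases h : a = e
  · subst h; simp [kinf, hx, hy, hij, Function.update]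
  · simp [kinf, Function.update, h]

lemma conflict_ksup (hx : x e = some i) (hy : y e = some j) (hij : i ≠ j) :
    ksup (Function.update x e none) y = Function.update (ksup x y) e (some j) := by
  funext a
  by_cases h : a = e
  · subst h; simp [ksup, hx, hy, hij, Function.update]
  · simp [ksup, Function.update, h]

lemma conflict_sup_none (hx : x e = some i) (hy : y e = some j) (hij : i ≠ j) :
    ksup x y e = none := by
  simp [ksup, hx, hy, hij]

lemma conflict_kle_left :
    kle (Function.update x e none) (ksup (Function.update x e none) (ksup x y)) := by
  intro a b hab
  by_cases h : a = e
  · subst h; simp [Function.update] at hab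
  · simp only [Function.update, dif_neg h] at hab ⊢
    simp only [ksup, hab, Function.update, dif_neg h]
    cases hya : y a with
    | none => simp
    | some c => by_cases hbc : b = c <;> simp [hbc]

lemma ksup_apply_none_left {a : E} (h : x a = none) : ksup x y a = y a := by
  cases hya : y a <;> simp [ksup, h, hya]

lemma ksup_apply_some_some {a : E} {c : Fin k} (hx : x a = some c) (hy : y a = some c) :
    ksup x y a = some c := by
  simp [ksup, hx, hy]

lemma conflict_kle_right :
    kle (ksup x y) (ksup (Function.update x e none) (ksup x y)) := by
  intro a b hab
  by_cases h : a = e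
  · subst h
    rw [ksup_apply_none_left (by simp : Function.update x a none a = none)]
    exact hab
  · rcases ksup_some_left hab with hxa | hxa
    · rw [ksup_apply_none_left (by rw [Function.update_of_ne h]; exact hxa)]
      exact hab
    · have hx'a : Function.update x e none a = some b := by
        rw [Function.update_of_ne h]; exact hxa
      exact ksup_apply_some_some hx'a hab

lemma conflict_z_none (hx : x e = some i) (hy : y e = some j) (hij : i ≠ j) :
    (ksup (Function.update x e none) (ksup x y)) e = none := by
  simp [ksup, hx, hy, hij, Function.update]

-- B step: x e = none, y e = some j, no conflicts, y' = update y e none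
lemma bstep_kinf (hxe : x e = none) :
    kinf x (Function.update y e none) = kinf x y := by
  funext a
  by_cases h : a = e
  · subst h; simp [kinf, hxe, Function.update]
  · simp [kinf, Function.update, h]

lemma bstep_ksup (hxe : x e = none) (hy : y e = some j) :
    ksup x y = Function.update (ksup x (Function.update y e none)) e (some j) := by
  funext a
  by_cases h : a = e
  · subst h; simp [ksup, Function.update, hxe, hy]
  · simp [ksup, Function.update, h]

lemma bstep_kle (noconf : ∀ a c d, x a = some c → y a = some d → c = d) :
    kle (Function.update y e none) (ksup x (Function.update y e none)) := by
  intro a b hab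
  by_cases h : a = e
  · subst h; simp [Function.update] at hab
  · simp only [Function.update, dif_neg h] at hab
    simp only [ksup, Function.update, dif_neg h, hab]
    cases hxa : x a with
    | none => rfl
    | some c => have := noconf a c b hxa hab; simp [this]

lemma bstep_none (hxe : x e = none) :
    (ksup x (Function.update y e none)) e = none := by
  simp [ksup, hxe, Function.update]

-- forward direction identities
lemma fwd_os_sup (hle : kle x y) (hye : y e = none) (i : Fin k) :
    ksup (Function.update x e (some i)) y = Function.update y e (some i) := by
  funext a
  by_cases h : a = e
  · subst h; simp [ksup, Function.update, hye]
  · simp only [ksup, Function.update, dif_neg h]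
    cases hxa : x a with
    | none => cases y a <;> simp
    | some c => have := hle a c hxa; simp [this]

lemma fwd_os_inf (hle : kle x y) (hye : y e = none) (i : Fin k) :
    kinf (Function.update x e (some i)) y = x := by
  funext a
  by_cases h : a = e
  · subst h
    have hxe : x a = none := by
      cases hxa : x a with
      | none => rfl
      | some c => exact absurd (hle a c hxa) (by simp [hye])
    simp [kinf, Function.update, hye, hxe]
  · simp only [kinf, Function.update, dif_neg h]
    cases hxa : x a with
    | none => cases y a <;> simp [hxa]
    | some c => have := hle a c hxa; simp [this, hxa]

lemma fwd_pm_sup (hxe : x e = none) (hij : i ≠ j) :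
    ksup (Function.update x e (some i)) (Function.update x e (some j)) = x := by
  funext a
  by_cases h : a = e
  · subst h; simp [ksup, Function.update, hij, hxe]
  · simp only [ksup, Function.update, dif_neg h]
    cases x a <;> simp

lemma fwd_pm_inf (hxe : x e = none) (hij : i ≠ j) :
    kinf (Function.update x e (some i)) (Function.update x e (some j)) = x := by
  funext a
  by_cases h : a = e
  · subst h; simp [kinf, Function.update, hij, hxe]
  · simp only [kinf, Function.update, dif_neg h]
    cases x a <;> simp

end Aux

section Key

variable {E : Type*} [Fintype E] [DecidableEq E] {k : ℕ}

private def measC (x y : E → Option (Fin k)) : Finset E :=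
  univ.filter fun a => x a ≠ none ∧ y a ≠ none ∧ x a ≠ y a

private def measB (x y : E → Option (Fin k)) : Finset E :=
  univ.filter fun a => x a = none ∧ y a ≠ none

lemma meas_conflict {x y : E → Option (Fin k)} {e : E} {i j : Fin k}
    (hx : x e = some i) (hy : y e = some j) (hij : i ≠ j) :
    2 * (measC (Function.update x e none) y).card
      + (measB (Function.update x e none) y).card + 1
      ≤ 2 * (measC x y).card + (measB x y).card := by
  have heC : e ∈ measC x y := by
    simp [measC, hx, hy]
    intro hcon
    exact hij hcon
  have hsubC : measC (Function.update x e none) y ⊆ (measC x y).erase e := by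
    intro a ha
    simp only [measC, mem_filter, mem_univ, true_and] at ha
    have hae : a ≠ e := by
      rintro rfl
      simp [Function.update] at ha
    rw [Function.update_of_ne hae] at ha
    exact mem_erase.mpr ⟨hae, by simp [measC, ha]⟩
  have hsubB : measB (Function.update x e none) y ⊆ insert e (measB x y) := by
    intro a ha
    by_cases hae : a = e
    · exact hae ▸ mem_insert_self _ _
    · simp only [measB, mem_filter, mem_univ, true_and, Function.update_of_ne hae] at ha
      exact mem_insert_of_mem (by simp [measB, ha])
  have h1 := card_le_card hsubC
  have h2 := card_erase_of_mem heC
  have h3 := card_le_card hsubB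
  have h4 := card_insert_le e (measB x y)
  have h5 : 0 < (measC x y).card := card_pos.mpr ⟨e, heC⟩
  omega

lemma meas_bstep {x y : E → Option (Fin k)} {e : E} {j : Fin k}
    (hxe : x e = none) (hy : y e = some j) :
    2 * (measC x (Function.update y e none)).card
      + (measB x (Function.update y e none)).card + 1
      ≤ 2 * (measC x y).card + (measB x y).card := by
  have heB : e ∈ measB x y := by simp [measB, hxe, hy]
  have hsubC : measC x (Function.update y e none) ⊆ measC x y := by
    intro a ha
    simp only [measC, mem_filter, mem_univ, true_and] at ha
    have hae : a ≠ e := by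
      rintro rfl
      simp [Function.update] at ha
    rw [Function.update_of_ne hae] at ha
    simp [measC, ha]
  have hsubB : measB x (Function.update y e none) ⊆ (measB x y).erase e := by
    intro a ha
    simp only [measB, mem_filter, mem_univ, true_and] at ha
    have hae : a ≠ e := by
      rintro rfl
      simp [Function.update] at ha
    rw [Function.update_of_ne hae] at ha
    exact mem_erase.mpr ⟨hae, by simp [measB, ha]⟩
  have h1 := card_le_card hsubC
  have h3 := card_le_card hsubB
  have h2 := card_erase_of_mem heB
  have h5 : 0 < (measB x y).card := card_pos.mpr ⟨e, heB⟩
  omega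

lemma key (f : (E → Option (Fin k)) → ℝ)
    (hOS : OrthantSubmodular f) (hPM : PairwiseMonotone f) :
    ∀ n : ℕ, ∀ x y : E → Option (Fin k),
      2 * (measC x y).card + (measB x y).card ≤ n →
      f (ksup x y) + f (kinf x y) ≤ f x + f y := by
  intro n
  induction n with
  | zero =>
    intro x y hm
    have hC : measC x y = ∅ := card_eq_zero.mp (by omega)
    have hB : measB x y = ∅ := card_eq_zero.mp (by omega)
    have hbase : ∀ a, y a ≠ none → x a = y a := by
      intro a hya
      by_cases hxa : x a = none
      · have hmem : a ∈ measB x y := by simp [measB, hxa, hya]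
        rw [hB] at hmem
        exact absurd hmem (notMem_empty a)
      · by_contra hne
        have hmem : a ∈ measC x y := by simp [measC, hxa, hya, hne]
        rw [hC] at hmem
        exact absurd hmem (notMem_empty a)
    rw [base_ksup hbase, base_kinf hbase]
  | succ n ih =>
    intro x y hm
    by_cases hCne : ∃ a, x a ≠ none ∧ y a ≠ none ∧ x a ≠ y a
    · -- conflict step
      obtain ⟨e, hxe, hye, hne⟩ := hCne
      obtain ⟨i, hx⟩ := Option.ne_none_iff_exists'.mp hxe
      obtain ⟨j, hy⟩ := Option.ne_none_iff_exists'.mp hye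
      have hij : i ≠ j := by rintro rfl; exact hne (hx.trans hy.symm)
      have hmeas : 2 * (measC (Function.update x e none) y).card
          + (measB (Function.update x e none) y).card ≤ n := by
        have := meas_conflict hx hy hij
        omega
      have hIH := ih (Function.update x e none) y hmeas
      rw [conflict_kinf hx hy hij, conflict_ksup hx hy hij] at hIH
      have hx'e : Function.update x e none e = none := by simp
      have hze := conflict_z_none (x := x) (y := y) hx hy hij
      have hsupe := conflict_sup_none hx hy hij
      have h1 : marg f (ksup (Function.update x e none) (ksup x y)) e i
          ≤ marg f (Function.update x e none) e i :=
        hOS _ _ conflict_kle_left e hze i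
      have h2 : marg f (ksup (Function.update x e none) (ksup x y)) e j
          ≤ marg f (ksup x y) e j :=
        hOS _ _ conflict_kle_right e hze j
      have h3 := hPM _ e hze i j hij
      rw [marg_eq hx'e, update_update hx] at h1
      rw [marg_eq hsupe] at h2
      calc f (ksup x y) + f (kinf x y)
          ≤ f (ksup x y) + (f (Function.update x e none) + f y
              - f (Function.update (ksup x y) e (some j))) := by linarith
        _ ≤ f x + f y := by linarith
    · by_cases hBne : ∃ a, x a = none ∧ y a ≠ none
      · -- B step
        obtain ⟨e, hxe, hye⟩ := hBne
        obtain ⟨j, hy⟩ := Option.ne_none_iff_exists'.mp hye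
        push_neg at hCne
        have noconf : ∀ a c d, x a = some c → y a = some d → c = d := by
          intro a c d hxa hya
          have h := hCne a (by simp [hxa]) (by simp [hya])
          rw [hxa, hya] at h
          exact Option.some.inj h
        have hmeas : 2 * (measC x (Function.update y e none)).card
            + (measB x (Function.update y e none)).card ≤ n := by
          have := meas_bstep hxe hy
          omega
        have hIH := ih x (Function.update y e none) hmeas
        rw [bstep_kinf hxe] at hIH
        have hsne := bstep_none (y := y) (e := e) hxe
        have hy'e : Function.update y e none e = none := by simp
        have h1 : marg f (ksup x (Function.update y e none)) e j
            ≤ marg f (Function.update y e none) e j :=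
          hOS _ _ (bstep_kle noconf) e hsne j
        rw [marg_eq hsne, marg_eq hy'e, update_update hy] at h1
        rw [bstep_ksup hxe hy]
        linarith
      · -- base
        push_neg at hCne hBne
        have hbase : ∀ a, y a ≠ none → x a = y a := by
          intro a hya
          by_cases hxa : x a = none
          · exact absurd (hBne a hxa) hya
          · exact hCne a hxa hya
        rw [base_ksup hbase, base_kinf hbase]

end Key

theorem stmt_4 {E : Type*} [Fintype E] [DecidableEq E] {k : ℕ}
    (f : (E → Option (Fin k)) → ℝ) :
    KSubmodular f ↔ OrthantSubmodular f ∧ PairwiseMonotone f := by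
  constructor
  · intro hsub
    constructor
    · intro x y hle e hye i
      have hxe : x e = none := by
        cases hxa : x e with
        | none => rfl
        | some c => exact absurd (hle e c hxa) (by simp [hye])
      have h := hsub (Function.update x e (some i)) y
      rw [fwd_os_sup hle hye i, fwd_os_inf hle hye i] at h
      rw [marg_eq hye i f, marg_eq hxe i f]
      linarith
    · intro x e hxe i j hij
      have h := hsub (Function.update x e (some i)) (Function.update x e (some j))
      rw [fwd_pm_sup hxe hij, fwd_pm_inf hxe hij] at h
      rw [marg_eq hxe i f, marg_eq hxe j f]
      linarith
  · rintro ⟨hOS, hPM⟩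
    intro x y
    exact key f hOS hPM (2 * (measC x y).card + (measB x y).card) x y le_rfl
end

section
/- Let f be k-submodular and nonnegative with f(∅) ≥ 0. Let q⁰ = ∅, and let q¹ ⪯ q² ⪯ ⋯ ⪯ q^w be a chain in (k+1)^E where each q^j adds one element to q^{j-1} so as to maximize f(q^{j-1} ⊔ I_{[e,i]}) over remaining e ∈ P(o) \ P(q^{j-1}) and i ∈ [k], for some fixed o ∈ (k+1)^E with P(q^w) ⊆ P(o). Then for any e' ∈ P(o) \ P(q^w) and any j ∈ [k] and any y ⪰ q^w with e' ∉ P(y): Δ_{e',j} f(y) ≤ (1/w)·f(q^w). -/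
open Finset

set_option linter.unusedSectionVars false

section Helpers
variable {E : Type*} [DecidableEq E] {k : ℕ}

lemma kle_none {x y : E → Option (Fin k)} (h : kle x y) {e : E} (hy : y e = none) :
    x e = none := by
  cases hx : x e with
  | none => rfl
  | some i => rw [h e i hx] at hy; exact absurd hy (by simp)

lemma ksup_single_of_ne {x : E → Option (Fin k)} {e e' : E} {i : Fin k} (h : e' ≠ e) :
    ksup x (ksingle e i) e' = x e' := by
  cases hx : x e' <;> simp [ksup, ksingle, hx, h]

lemma ksup_single_self {x : E → Option (Fin k)} {e : E} {i : Fin k} (hx : x e = none) :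
    ksup x (ksingle e i) e = some i := by
  simp [ksup, ksingle, hx]

lemma kle_ksup_single {x : E → Option (Fin k)} {e : E} {i : Fin k} (hx : x e = none) :
    kle x (ksup x (ksingle e i)) := by
  intro e' i' h
  by_cases he : e' = e
  · subst he; rw [hx] at h; exact absurd h (by simp)
  · rw [ksup_single_of_ne he]; exact h

lemma orth_of_ksub {f : (E → Option (Fin k)) → ℝ} (hf : KSubmodular f) :
    OrthantSubmodular f := by
  intro x y hxy e hye i
  have hxe : x e = none := kle_none hxy hye
  have key := hf (ksup x (ksingle e i)) y
  have h1 : ksup (ksup x (ksingle e i)) y = ksup y (ksingle e i) := by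
    funext e'
    by_cases he : e' = e
    · subst he
      have l1 := ksup_single_self (x := x) (i := i) hxe
      have l2 := ksup_single_self (x := y) (i := i) hye
      show ksup (ksup x (ksingle e' i)) y e' = ksup y (ksingle e' i) e'
      rw [show ksup (ksup x (ksingle e' i)) y e' =
        (match (ksup x (ksingle e' i)) e', y e' with
          | none, b => b
          | some i, none => some i
          | some i, some j => if i = j then some i else none) from rfl, l1, hye, l2]
    · have l1 := ksup_single_of_ne (x := x) (i := i) he
      have l2 := ksup_single_of_ne (x := y) (i := i) he
      show ksup (ksup x (ksingle e i)) y e' = _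
      rw [show ksup (ksup x (ksingle e i)) y e' =
        (match (ksup x (ksingle e i)) e', y e' with
          | none, b => b
          | some i, none => some i
          | some i, some j => if i = j then some i else none) from rfl, l1, l2]
      cases hx : x e' with
      | none => simp [ksup, hx]
      | some i' => have := hxy e' i' hx; simp [ksup, hx, this]
  have h2 : kinf (ksup x (ksingle e i)) y = x := by
    funext e'
    by_cases he : e' = e
    · subst he
      have l1 := ksup_single_self (x := x) (i := i) hxe
      show kinf (ksup x (ksingle e' i)) y e' = x e'
      rw [show kinf (ksup x (ksingle e' i)) y e' =
        (match (ksup x (ksingle e' i)) e', y e' with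
          | some i, some j => if i = j then some i else none
          | _, _ => none) from rfl, l1, hye, hxe]
    · have l1 := ksup_single_of_ne (x := x) (i := i) he
      show kinf (ksup x (ksingle e i)) y e' = x e'
      rw [show kinf (ksup x (ksingle e i)) y e' =
        (match (ksup x (ksingle e i)) e', y e' with
          | some i, some j => if i = j then some i else none
          | _, _ => none) from rfl, l1]
      cases hx : x e' with
      | none => rfl
      | some i' => have := hxy e' i' hx; simp [this]
  rw [h1, h2] at key
  simp only [marg]
  linarith

end Helpers

theorem stmt_7 {E : Type*} [Fintype E] [DecidableEq E] {k w : ℕ}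
    (hk : 0 < k) (hw : 0 < w)
    (f : (E → Option (Fin k)) → ℝ) (hf : KSubmodular f) (hnn : ∀ x, 0 ≤ f x)
    (o : E → Option (Fin k)) (q : ℕ → (E → Option (Fin k)))
    (hq0 : q 0 = fun _ => none)
    (hstep : ∀ j, 1 ≤ j → j ≤ w → ∃ e ∈ suppK o \ suppK (q (j - 1)), ∃ i : Fin k,
      q j = ksup (q (j - 1)) (ksingle e i))
    (hgreedy : ∀ j, 1 ≤ j → j ≤ w →
      ∀ e ∈ suppK o \ suppK (q (j - 1)), ∀ i : Fin k,
        f (ksup (q (j - 1)) (ksingle e i)) ≤ f (q j))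
    (hsub : suppK (q w) ⊆ suppK o) :
    ∀ e' ∈ suppK o \ suppK (q w), ∀ j : Fin k,
      ∀ y : E → Option (Fin k), kle (q w) y → y e' = none →
        marg f y e' j ≤ f (q w) / w := by
  intro e' he' j y hy hye
  have horth := orth_of_ksub hf
  rw [Finset.mem_sdiff] at he'
  obtain ⟨he'o, he'w⟩ := he'
  have hqwnone : q w e' = none := by
    by_contra h
    exact he'w (by simp [suppK, h])
  have hstep' : ∀ l, l < w → kle (q l) (q (l + 1)) := by
    intro l hl
    obtain ⟨e, he, i, heq⟩ := hstep (l + 1) (by omega) (by omega)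
    rw [Nat.add_sub_cancel] at he heq
    rw [Finset.mem_sdiff] at he
    have hnone : q l e = none := by
      by_contra h
      exact he.2 (by simp [suppK, h])
    rw [heq]
    exact kle_ksup_single hnone
  have hchain : ∀ d l, l + d ≤ w → kle (q l) (q (l + d)) := by
    intro d
    induction d with
    | zero => intro l _ e i h; exact h
    | succ n ih =>
      intro l hl e i h
      have h1 := ih l (by omega) e i h
      have h2 := hstep' (l + n) (by omega) e i h1
      rwa [show l + n + 1 = l + (n + 1) by omega] at h2
  have hle : ∀ l, l ≤ w → kle (q l) (q w) := by
    intro l hl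
    have := hchain (w - l) l (by omega)
    rwa [show l + (w - l) = w by omega] at this
  have hkey : ∀ l < w, marg f y e' j ≤ f (q (l + 1)) - f (q l) := by
    intro l hl
    have h1 : kle (q l) y := fun e i h => hy e i (hle l hl.le e i h)
    have hqle' : q l e' = none := kle_none (hle l hl.le) hqwnone
    have h2 := horth (q l) y h1 e' hye j
    have hmem : e' ∈ suppK o \ suppK (q l) :=
      Finset.mem_sdiff.mpr ⟨he'o, by simp [suppK, hqle']⟩
    have hg := hgreedy (l + 1) (by omega) (by omega) e'
      (by rwa [Nat.add_sub_cancel]) j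
    rw [Nat.add_sub_cancel] at hg
    simp only [marg] at h2 ⊢
    linarith
  have hsum : (w : ℝ) * marg f y e' j ≤ f (q w) - f (q 0) := by
    have h1 : ∑ l ∈ Finset.range w, marg f y e' j ≤
        ∑ l ∈ Finset.range w, (f (q (l + 1)) - f (q l)) :=
      Finset.sum_le_sum fun l hl => hkey l (Finset.mem_range.mp hl)
    rw [Finset.sum_const, Finset.card_range, nsmul_eq_mul] at h1
    rwa [Finset.sum_range_sub (fun l => f (q l))] at h1
  have hq0nn : 0 ≤ f (q 0) := hnn _
  have hwpos : (0 : ℝ) < w := by exact_mod_cast hw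
  rw [le_div_iff₀ hwpos]
  nlinarith [hkey 0 hw]
end

section
/- Suppose nonnegative reals g₀ = 0 ≤ g₁ ≤ ⋯ ≤ g_p and positive reals θ₁ ≥ θ₂ ≥ ⋯ ≥ θ_p and positive integers c₁, …, c_p satisfy g_t = ∑_{τ=1}^{t} c_τ θ_τ for all t, and suppose G ≥ 0 and L'' > 0 satisfy G ≤ 2(g_t + (L''/2)·θ_{t+1}) for every t = 0, …, p-1, where L'' ≤ ∑_{τ=1}^p c_τ. Then g_p ≥ (1/2)(1 - e^{-2}) · G. -/
theorem stmt_11 (p : ℕ) (hp : 0 < p) (c : ℕ → ℕ) (θ : ℕ → ℝ)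
    (hc : ∀ τ, 1 ≤ τ → τ ≤ p → 0 < c τ)
    (hθ : ∀ τ, 1 ≤ τ → τ ≤ p → 0 < θ τ)
    (hθmono : ∀ τ, 1 ≤ τ → τ < p → θ (τ + 1) ≤ θ τ)
    (G L'' : ℝ) (hG : 0 ≤ G) (hL : 0 < L'')
    (hLle : L'' ≤ ∑ τ ∈ Finset.Icc 1 p, (c τ : ℝ))
    (hkey : ∀ t, t < p →
      G ≤ 2 * ((∑ τ ∈ Finset.Icc 1 t, (c τ : ℝ) * θ τ) + (L'' / 2) * θ (t + 1))) :
    (∑ τ ∈ Finset.Icc 1 p, (c τ : ℝ) * θ τ) ≥ (1 / 2) * (1 - Real.exp (-2)) * G := by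
  set g : ℕ → ℝ := fun t => ∑ τ ∈ Finset.Icc 1 t, (c τ : ℝ) * θ τ with hgdef
  by_cases hcase : ∃ t, t ≤ p ∧ G / 2 ≤ g t
  · obtain ⟨t, htp, hgt⟩ := hcase
    have hmono : g t ≤ g p := by
      apply Finset.sum_le_sum_of_subset_of_nonneg (Finset.Icc_subset_Icc_right htp)
      intro i hi _
      have h1 := (Finset.mem_Icc.mp hi).1
      have h2 := (Finset.mem_Icc.mp hi).2
      have := hθ i h1 h2
      positivity
    have hexp := Real.exp_pos (-2 : ℝ)
    nlinarith [hmono, hgt]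
  · push_neg at hcase
    have key : ∀ t, t ≤ p →
        G / 2 - g t ≤ G / 2 * Real.exp (-2 * (∑ τ ∈ Finset.Icc 1 t, (c τ : ℝ)) / L'') := by
      intro t
      induction t with
      | zero =>
          intro _
          simp [hgdef]
      | succ n ih =>
          intro hnp
          have hn : n ≤ p := Nat.le_of_succ_le hnp
          have IH := ih hn
          have hgn : g n < G / 2 := hcase n hn
          have hsplit : g (n + 1) = g n + (c (n + 1) : ℝ) * θ (n + 1) := by
            simp only [hgdef]
            rw [Finset.sum_Icc_succ_top (Nat.one_le_iff_ne_zero.mpr (Nat.succ_ne_zero n))]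
          have hcsplit : (∑ τ ∈ Finset.Icc 1 (n + 1), (c τ : ℝ))
              = (∑ τ ∈ Finset.Icc 1 n, (c τ : ℝ)) + (c (n + 1) : ℝ) := by
            rw [Finset.sum_Icc_succ_top (Nat.one_le_iff_ne_zero.mpr (Nat.succ_ne_zero n))]
          have hθn : (G - 2 * g n) / L'' ≤ θ (n + 1) := by
            have hk := hkey n (Nat.lt_of_succ_le hnp)
            rw [div_le_iff₀ hL]
            nlinarith
          have hcpos : (0 : ℝ) ≤ (c (n + 1) : ℝ) := Nat.cast_nonneg _
          have hstep : G / 2 - g (n + 1) ≤ (G / 2 - g n) * (1 - 2 * (c (n + 1) : ℝ) / L'') := by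
            have h1 : (c (n + 1) : ℝ) * ((G - 2 * g n) / L'') ≤ (c (n + 1) : ℝ) * θ (n + 1) :=
              mul_le_mul_of_nonneg_left hθn hcpos
            rw [hsplit]
            have : (G / 2 - g n) * (1 - 2 * (c (n + 1) : ℝ) / L'')
                = G / 2 - g n - (c (n + 1) : ℝ) * ((G - 2 * g n) / L'') := by
              field_simp
            rw [this]
            linarith
          set x : ℝ := 2 * (c (n + 1) : ℝ) / L'' with hx
          have hxnn : 0 ≤ x := by positivity
          have hexp1 : 1 - x ≤ Real.exp (-x) := by
            have := Real.add_one_le_exp (-x)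
            linarith
          have h2 : (G / 2 - g n) * (1 - x) ≤ (G / 2 - g n) * Real.exp (-x) :=
            mul_le_mul_of_nonneg_left hexp1 (by linarith)
          have h3 : (G / 2 - g n) * Real.exp (-x)
              ≤ (G / 2 * Real.exp (-2 * (∑ τ ∈ Finset.Icc 1 n, (c τ : ℝ)) / L'')) * Real.exp (-x) :=
            mul_le_mul_of_nonneg_right IH (Real.exp_pos _).le
          have h4 : (G / 2 * Real.exp (-2 * (∑ τ ∈ Finset.Icc 1 n, (c τ : ℝ)) / L'')) * Real.exp (-x)
              = G / 2 * Real.exp (-2 * (∑ τ ∈ Finset.Icc 1 (n + 1), (c τ : ℝ)) / L'') := by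
            rw [mul_assoc, ← Real.exp_add, hcsplit, hx]
            ring_nf
          linarith [hstep, h2, h3, h4.symm.le, h4.le]
    have hfin := key p le_rfl
    have hexple : Real.exp (-2 * (∑ τ ∈ Finset.Icc 1 p, (c τ : ℝ)) / L'') ≤ Real.exp (-2) := by
      apply Real.exp_le_exp.mpr
      rw [div_le_iff₀ hL]
      nlinarith
    have : G / 2 * Real.exp (-2 * (∑ τ ∈ Finset.Icc 1 p, (c τ : ℝ)) / L'')
        ≤ G / 2 * Real.exp (-2) :=
      mul_le_mul_of_nonneg_left hexple (by linarith)
    linarith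
end

section
/- Suppose real numbers satisfy: f_s ≥ f₀ + γ·g for some γ ∈ [0,1] with g ≥ 0, and (c)·f₀ ≥ F - g where c = (2w+1)/w for a positive integer w. Then f_s ≥ min{w/(2w+1), γ}·F, provided F ≥ g ≥ 0 and f₀ ≥ 0. -/
theorem stmt_19 (fs f0 g F γ : ℝ) (w : ℕ) (hw : 1 ≤ w)
    (hγ0 : 0 ≤ γ) (hγ1 : γ ≤ 1) (hg : 0 ≤ g) (hf0 : 0 ≤ f0)
    (hF : 0 ≤ F) (hgF : g ≤ F)
    (h1 : f0 + γ * g ≤ fs)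
    (h2 : F - g ≤ ((2 * w + 1) / w) * f0) :
    min ((w : ℝ) / (2 * w + 1)) γ * F ≤ fs := by
  have hw' : (1 : ℝ) ≤ (w : ℝ) := by exact_mod_cast hw
  have hwpos : (0 : ℝ) < (w : ℝ) := by linarith
  have hd : (0 : ℝ) < 2 * (w : ℝ) + 1 := by linarith
  have h2' : (w : ℝ) * (F - g) ≤ (2 * (w : ℝ) + 1) * f0 := by
    have := h2
    rw [div_mul_eq_mul_div, le_div_iff₀ hwpos] at this
    nlinarith [this]
  rcases min_cases ((w : ℝ) / (2 * w + 1)) γ with ⟨hmin, hle⟩ | ⟨hmin, hle⟩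
  · rw [hmin]
    rw [div_mul_eq_mul_div, div_le_iff₀ hd]
    have hγg : (w : ℝ) / (2 * w + 1) * g ≤ γ * g := by
      apply mul_le_mul_of_nonneg_right hle hg
    rw [div_mul_eq_mul_div, div_le_iff₀ hd] at hγg
    nlinarith
  · rw [hmin]
    have hγr : γ * (2 * (w : ℝ) + 1) ≤ (w : ℝ) := by
      have := le_of_lt hle
      rw [le_div_iff₀ hd] at this
      linarith
    nlinarith [mul_le_mul_of_nonneg_left h2' hγ0]
end
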